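/- Fix an integer t \ge 1. As q \to \infty over prime powers, the quantity \prod_{j=1}^t \prod_{i \ge 1} (1 - 1/q^{ij})^{N(q;j)} converges to e^{-(1 + 1/2 + \cdots + 1/t)}. -/

import Mathlib

/-- `N(q;j)`: the number of monic irreducible polynomials of degree `j` over the
finite field `F` with nonzero constant term. -/
noncomputable def numIrred (F : Type) [Field F] [Fintype F] (j : ℕ) : ℕ :=
  Nat.card {p : Polynomial F // p.Monic ∧ Irreducible p ∧ p.natDegree = j ∧ p.coeff 0 ≠ 0}

open Polynomial IntermediateField


private lemma geom_aux (q : ℕ) (hq : 2 ≤ q) : ∀ j, 1 ≤ j →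
    ∑ d ∈ Finset.Ico 1 j, q ^ d ≤ 2 * q ^ (j - 1) := by
  intro j hj
  induction j with
  | zero => omega
  | succ n ih =>
    rcases Nat.lt_or_ge 1 (n+1) with h | h
    · have hn : 1 ≤ n := by omega
      rw [Finset.sum_Ico_succ_top hn]
      have h1 := ih hn
      have h2 : 2 * q ^ (n-1) ≤ q ^ n := by
        have h3 : q ^ n = q ^ (n - 1) * q := by
          rw [← pow_succ]; congr 1; omega
        calc 2 * q ^ (n-1) = q ^ (n-1) * 2 := mul_comm _ _
          _ ≤ q ^ (n-1) * q := Nat.mul_le_mul_left _ hq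
          _ = q ^ n := h3.symm
      have h4 : (n + 1) - 1 = n := by omega
      rw [h4]
      omega
    · have : n = 0 := by omega
      subst this
      simp

private lemma finite_aux (F : Type) [Field F] [Fintype F] (j : ℕ) (P : Polynomial F → Prop)
    (hP : ∀ p, P p → p.natDegree = j) : Finite {p : Polynomial F // P p} := by
  apply Finite.of_injective
    (f := fun (p : {p : Polynomial F // P p}) => (fun i : Fin (j+1) => p.1.coeff i))
  intro p p' h
  apply Subtype.ext
  ext n
  rcases Nat.lt_or_ge n (j+1) with hn | hn
  · exact congrFun h ⟨n, hn⟩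
  · rw [coeff_eq_zero_of_natDegree_lt, coeff_eq_zero_of_natDegree_lt]
    · rw [hP p' p'.2]; omega
    · rw [hP p p.2]; omega

private lemma Mcard_aux (F : Type) [Field F] [Fintype F] (j : ℕ) (hj : 1 ≤ j) :
    (Fintype.card F) ^ j ≤
        j * (Nat.card {p : Polynomial F // p.Monic ∧ Irreducible p ∧ p.natDegree = j})
          + 2 * (Fintype.card F) ^ (j - 1) ∧
      j * (Nat.card {p : Polynomial F // p.Monic ∧ Irreducible p ∧ p.natDegree = j})
        ≤ (Fintype.card F) ^ j := by
  classical
  obtain ⟨q, hq_def⟩ : ∃ n, Fintype.card F = n := ⟨_, rfl⟩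
  rw [hq_def]
  have hq : 2 ≤ q := hq_def ▸ Fintype.one_lt_card
  have hqj : 1 < q ^ j := Nat.one_lt_pow (by omega) hq
  set gp : Polynomial F := X ^ (q ^ j) - X with hgp
  have hgp_ne : gp ≠ 0 := FiniteField.X_pow_card_sub_X_ne_zero F hqj
  have hgp_deg : gp.natDegree = q ^ j := FiniteField.X_pow_card_sub_X_natDegree_eq F hqj
  obtain ⟨p, pchar⟩ := CharP.exists F
  haveI : CharP F p := pchar
  have hp_prime : p.Prime := CharP.char_is_prime F p
  haveI := Fact.mk hp_prime
  obtain ⟨e, _, hq_eq⟩ := FiniteField.card F p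
  have hpq' : p ∣ q := by
    rw [← hq_def, hq_eq]
    exact dvd_pow_self p e.ne_zero
  have hpq : p ∣ q ^ j := dvd_pow hpq' (by omega)
  have hsep : gp.Separable := galois_poly_separable p (q ^ j) hpq
  set E := gp.SplittingField with hE
  have hsplits : Splits (gp.map (algebraMap F E)) := IsSplittingField.splits E gp
  haveI : Finite E := Module.finite_of_finite F
  haveI : Fintype E := Fintype.ofFinite E
  haveI : CharP E p := charP_of_injective_algebraMap (algebraMap F E).injective p
  haveI : ExpChar E p := ExpChar.prime hp_prime
  have hEq : q ^ j = p ^ ((e : ℕ) * j) := by rw [← hq_def, hq_eq, ← pow_mul]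
  have haev : ∀ y : E, (aeval y) gp = y ^ q ^ j - y := by
    intro y
    show (aeval y) (X ^ (q ^ j) - X : Polynomial F) = _
    simp
  have hroot_all : ∀ x : E, x ^ q ^ j = x := by
    set φ := iterateFrobenius E p ((e : ℕ) * j) with hφ
    have key : ∀ x : E, φ x = x := by
      intro x
      have htop : x ∈ Subring.closure (Set.range (algebraMap F E) ∪ gp.rootSet E) := by
        have h1 : Algebra.adjoin F (gp.rootSet E) = ⊤ := IsSplittingField.adjoin_rootSet E gp
        have h2 : x ∈ Algebra.adjoin F (gp.rootSet E) := h1 ▸ trivial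
        rwa [Algebra.mem_adjoin_iff] at h2
      have hle : Subring.closure (Set.range (algebraMap F E) ∪ gp.rootSet E) ≤
          RingHom.eqLocus φ (RingHom.id E) := by
        rw [Subring.closure_le]
        rintro y (⟨a, rfl⟩ | hy)
        · show φ _ = _
          rw [hφ, iterateFrobenius_def, ← hEq, ← map_pow]
          have ha : a ^ q ^ j = a := by
            rw [← hq_def]
            exact FiniteField.pow_card_pow j a
          rw [ha]
          rfl
        · show φ y = y
          rw [mem_rootSet_of_ne hgp_ne, haev y] at hy
          rw [hφ, iterateFrobenius_def, ← hEq]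
          have := sub_eq_zero.mp hy
          simpa using this
      exact hle htop
    intro x
    have h := key x
    rwa [hφ, iterateFrobenius_def, ← hEq] at h
  have hcardE : Fintype.card E = q ^ j := by
    have key : Fintype.card (gp.rootSet E) = gp.natDegree :=
      card_rootSet_eq_natDegree hsep hsplits
    rw [hgp_deg] at key
    have huniv : gp.rootSet E = Set.univ := by
      ext x
      simp only [Set.mem_univ, iff_true]
      rw [mem_rootSet_of_ne hgp_ne, haev x, hroot_all x, sub_self]
    calc Fintype.card E = Nat.card E := Nat.card_eq_fintype_card.symm
      _ = Nat.card (Set.univ : Set E) := Nat.card_univ.symm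
      _ = Nat.card (gp.rootSet E) := by rw [huniv]
      _ = Fintype.card (gp.rootSet E) := Nat.card_eq_fintype_card
      _ = q ^ j := key
  have hfinrank : Module.finrank F E = j := by
    have h := Module.card_eq_pow_finrank (K := F) (V := E)
    rw [hq_def, hcardE] at h
    exact (Nat.pow_right_injective hq h).symm
  have hint : ∀ α : E, IsIntegral F α := fun α => IsIntegral.of_finite F α
  have hDle : ∀ α : E, (minpoly F α).natDegree ≤ j := fun α => hfinrank ▸ minpoly.natDegree_le α
  have hDpos : ∀ α : E, 0 < (minpoly F α).natDegree := fun α => minpoly.natDegree_pos (hint α)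
  have hpowD : ∀ α : E, α ^ q ^ ((minpoly F α).natDegree) = α := by
    intro α
    haveI : Finite (F⟮α⟯) := Module.finite_of_finite F
    haveI : Fintype (F⟮α⟯) := Fintype.ofFinite _
    have h1 : Fintype.card (F⟮α⟯) = q ^ (minpoly F α).natDegree := by
      rw [Module.card_eq_pow_finrank (K := F) (V := F⟮α⟯), IntermediateField.adjoin.finrank (hint α),
        hq_def]
    have h2 : (⟨α, IntermediateField.mem_adjoin_simple_self F α⟩ : F⟮α⟯)
          ^ (q ^ (minpoly F α).natDegree)
        = (⟨α, IntermediateField.mem_adjoin_simple_self F α⟩ : F⟮α⟯) := by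
      rw [← h1]; exact FiniteField.pow_card _
    have h3 := congrArg (Subtype.val) h2
    simpa using h3
  set Sfin : Finset E := Finset.univ.filter (fun α => (minpoly F α).natDegree = j) with hSfin
  set Ifin : Finset (Polynomial F) := Sfin.image (minpoly F) with hIfin
  have hdvd : ∀ f : Polynomial F, f.Monic → Irreducible f → f.natDegree = j → f ∣ gp := by
    intro f hm hirr hd
    haveI := Fact.mk hirr
    haveI : Module.Finite F (AdjoinRoot f) := PowerBasis.finite (AdjoinRoot.powerBasis hm.ne_zero)
    haveI : Finite (AdjoinRoot f) := Module.finite_of_finite F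
    haveI : Fintype (AdjoinRoot f) := Fintype.ofFinite _
    have hfr : Module.finrank F (AdjoinRoot f) = j := by
      rw [(AdjoinRoot.powerBasis hm.ne_zero).finrank, AdjoinRoot.powerBasis_dim, hd]
    have hcardK : Fintype.card (AdjoinRoot f) = q ^ j := by
      rw [Module.card_eq_pow_finrank (K := F) (V := AdjoinRoot f), hfr, hq_def]
    have hroot : (aeval (AdjoinRoot.root f)) f = 0 := by
      rw [aeval_def]
      exact AdjoinRoot.eval₂_root f
    have hxq : (AdjoinRoot.root f) ^ q ^ j = AdjoinRoot.root f := by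
      rw [← hcardK]; exact FiniteField.pow_card _
    have haev2 : (aeval (AdjoinRoot.root f)) gp = 0 := by
      show (aeval (AdjoinRoot.root f)) (X ^ (q ^ j) - X : Polynomial F) = 0
      simp [hxq]
    have hmin : minpoly F (AdjoinRoot.root f) = f :=
      (minpoly.eq_of_irreducible_of_monic hirr hroot hm).symm
    have hdd := minpoly.dvd F (AdjoinRoot.root f) haev2
    rwa [hmin] at hdd
  have hsplits_f : ∀ f : Polynomial F, f.Monic → Irreducible f → f.natDegree = j →
      Splits (f.map (algebraMap F E)) :=
    fun f hm hirr hd => hsplits.of_dvd (Polynomial.map_ne_zero hgp_ne) (Polynomial.map_dvd _ (hdvd f hm hirr hd))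
  have hIfin_mem : ∀ f : Polynomial F,
      f ∈ Ifin ↔ (f.Monic ∧ Irreducible f ∧ f.natDegree = j) := by
    intro f
    constructor
    · intro hf
      rw [hIfin, Finset.mem_image] at hf
      obtain ⟨α, hα, rfl⟩ := hf
      rw [hSfin, Finset.mem_filter] at hα
      exact ⟨minpoly.monic (hint α), minpoly.irreducible (hint α), hα.2⟩
    · rintro ⟨hm, hirr, hd⟩
      have hdeg0 : f.degree ≠ 0 := by
        rw [degree_eq_natDegree hm.ne_zero, hd]
        intro hcon
        have : j = 0 := by exact_mod_cast hcon
        omega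
      obtain ⟨α, hα⟩ := (hsplits_f f hm hirr hd).exists_eval_eq_zero (by rwa [degree_map])
      have haeval : (aeval α) f = 0 := by rwa [aeval_def, eval₂_eq_eval_map]
      have hminα : minpoly F α = f := (minpoly.eq_of_irreducible_of_monic hirr haeval hm).symm
      rw [hIfin, Finset.mem_image]
      refine ⟨α, ?_, hminα⟩
      rw [hSfin, Finset.mem_filter]
      exact ⟨Finset.mem_univ _, by rw [hminα, hd]⟩
  have hb1 : Sfin.card ≤ j * Ifin.card := by
    apply Finset.card_le_mul_card_image
    intro f hf
    have hf' : f ∈ Ifin := by rwa [hIfin]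
    obtain ⟨hm, hirr, hd⟩ := (hIfin_mem f).1 hf'
    have hsub : Sfin.filter (fun α => minpoly F α = f) ⊆
        (f.map (algebraMap F E)).roots.toFinset := by
      intro α hα
      rw [Finset.mem_filter] at hα
      rw [Multiset.mem_toFinset, mem_roots (map_ne_zero hm.ne_zero)]
      have h5 : (aeval α) f = 0 := by rw [← hα.2]; exact minpoly.aeval F α
      rwa [aeval_def, eval₂_eq_eval_map] at h5
    calc (Sfin.filter (fun α => minpoly F α = f)).card
        ≤ ((f.map (algebraMap F E)).roots.toFinset).card := Finset.card_le_card hsub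
      _ ≤ Multiset.card (f.map (algebraMap F E)).roots := Multiset.toFinset_card_le _
      _ ≤ (f.map (algebraMap F E)).natDegree := card_roots' _
      _ = f.natDegree := natDegree_map _
      _ = j := hd
  have hroots_card : ∀ f ∈ Ifin, ((f.map (algebraMap F E)).roots.toFinset).card = j := by
    intro f hf
    obtain ⟨hm, hirr, hd⟩ := (hIfin_mem f).1 hf
    have hsep_f : f.Separable := PerfectField.separable_of_irreducible hirr
    have hnodup : (f.map (algebraMap F E)).roots.Nodup := nodup_roots hsep_f.map
    rw [Multiset.toFinset_card_of_nodup hnodup,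
      ← (hsplits_f f hm hirr hd).natDegree_eq_card_roots, natDegree_map, hd]
  have hb2 : j * Ifin.card ≤ q ^ j := by
    have hdisj : ∀ f ∈ Ifin, ∀ g ∈ Ifin, f ≠ g →
        Disjoint ((f.map (algebraMap F E)).roots.toFinset)
          ((g.map (algebraMap F E)).roots.toFinset) := by
      intro f hf g hg hfg
      obtain ⟨hmf, hirrf, hdf⟩ := (hIfin_mem f).1 hf
      obtain ⟨hmg, hirrg, hdg⟩ := (hIfin_mem g).1 hg
      rw [Finset.disjoint_left]
      intro α hαf hαg
      apply hfg
      rw [Multiset.mem_toFinset, mem_roots (map_ne_zero hmf.ne_zero)] at hαf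
      rw [Multiset.mem_toFinset, mem_roots (map_ne_zero hmg.ne_zero)] at hαg
      have h1 : (aeval α) f = 0 := by rw [aeval_def, eval₂_eq_eval_map]; exact hαf
      have h2 : (aeval α) g = 0 := by rw [aeval_def, eval₂_eq_eval_map]; exact hαg
      rw [minpoly.eq_of_irreducible_of_monic hirrf h1 hmf,
        minpoly.eq_of_irreducible_of_monic hirrg h2 hmg]
    calc j * Ifin.card = ∑ _f ∈ Ifin, j := by rw [Finset.sum_const, smul_eq_mul, mul_comm]
      _ = ∑ f ∈ Ifin, ((f.map (algebraMap F E)).roots.toFinset).card :=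
          Finset.sum_congr rfl (fun f hf => (hroots_card f hf).symm)
      _ = (Ifin.biUnion (fun f => (f.map (algebraMap F E)).roots.toFinset)).card :=
          (Finset.card_biUnion hdisj).symm
      _ ≤ Fintype.card E := by
          rw [← Finset.card_univ]
          exact Finset.card_le_card (Finset.subset_univ _)
      _ = q ^ j := hcardE
  have hb3 : q ^ j ≤ Sfin.card + 2 * q ^ (j - 1) := by
    have hcompl : Finset.univ \ Sfin ⊆ (Finset.Ico 1 j).biUnion
        (fun d => ((X ^ q ^ d - X : Polynomial E).roots.toFinset)) := by
      intro α hα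
      rw [Finset.mem_sdiff, hSfin, Finset.mem_filter] at hα
      have hne : (minpoly F α).natDegree ≠ j := fun h => hα.2 ⟨Finset.mem_univ _, h⟩
      rw [Finset.mem_biUnion]
      refine ⟨(minpoly F α).natDegree,
        Finset.mem_Ico.2 ⟨hDpos α, lt_of_le_of_ne (hDle α) hne⟩, ?_⟩
      have hone : 1 < q ^ (minpoly F α).natDegree :=
        Nat.one_lt_pow (by have := hDpos α; omega) hq
      rw [Multiset.mem_toFinset,
        mem_roots (FiniteField.X_pow_card_sub_X_ne_zero E hone)]
      show eval α _ = 0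
      simp [hpowD α]
    have hcard_compl : (Finset.univ \ Sfin).card ≤ 2 * q ^ (j - 1) := by
      calc (Finset.univ \ Sfin).card
          ≤ ((Finset.Ico 1 j).biUnion
              (fun d => ((X ^ q ^ d - X : Polynomial E).roots.toFinset))).card :=
            Finset.card_le_card hcompl
        _ ≤ ∑ d ∈ Finset.Ico 1 j, ((X ^ q ^ d - X : Polynomial E).roots.toFinset).card :=
            Finset.card_biUnion_le
        _ ≤ ∑ d ∈ Finset.Ico 1 j, q ^ d := by
            apply Finset.sum_le_sum
            intro d hd
            rw [Finset.mem_Ico] at hd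
            have hone : 1 < q ^ d := Nat.one_lt_pow (by omega) hq
            calc ((X ^ q ^ d - X : Polynomial E).roots.toFinset).card
                ≤ Multiset.card (X ^ q ^ d - X : Polynomial E).roots :=
                  Multiset.toFinset_card_le _
              _ ≤ (X ^ q ^ d - X : Polynomial E).natDegree := card_roots' _
              _ = q ^ d := FiniteField.X_pow_card_sub_X_natDegree_eq E hone
        _ ≤ 2 * q ^ (j - 1) := geom_aux q hq j hj
    have hsplit : Fintype.card E = Sfin.card + (Finset.univ \ Sfin).card := by
      rw [Finset.card_sdiff_of_subset (Finset.subset_univ _), Finset.card_univ]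
      have := Finset.card_le_card (Finset.subset_univ Sfin)
      rw [Finset.card_univ] at this
      omega
    rw [← hcardE]
    omega
  have hM : Nat.card {p : Polynomial F // p.Monic ∧ Irreducible p ∧ p.natDegree = j}
      = Ifin.card := by
    have hset : {p : Polynomial F | p.Monic ∧ Irreducible p ∧ p.natDegree = j}
        = (↑Ifin : Set (Polynomial F)) := by
      ext f
      rw [Finset.mem_coe, hIfin_mem]
      rfl
    calc Nat.card {p : Polynomial F // p.Monic ∧ Irreducible p ∧ p.natDegree = j}
        = ({p : Polynomial F | p.Monic ∧ Irreducible p ∧ p.natDegree = j}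
            : Set (Polynomial F)).ncard := Nat.card_coe_set_eq _
      _ = (↑Ifin : Set (Polynomial F)).ncard := by rw [hset]
      _ = Ifin.card := Set.ncard_coe_finset _
  rw [hM]
  exact ⟨le_trans hb3 (by omega), hb2⟩

private lemma numIrred_bounds (F : Type) [Field F] [Fintype F] (j : ℕ) (hj : 1 ≤ j) :
    Fintype.card F ^ j ≤ j * numIrred F j + 2 * Fintype.card F ^ (j - 1) ∧
      j * numIrred F j ≤ Fintype.card F ^ j := by
  classical
  rcases Nat.lt_or_ge j 2 with h2 | h2
  · have hj1 : j = 1 := by omega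
    subst hj1
    haveI : Finite {p : Polynomial F // p.Monic ∧ Irreducible p ∧ p.natDegree = 1 ∧
        p.coeff 0 ≠ 0} := finite_aux F 1 _ (fun p hp => hp.2.2.1)
    have hcard2 : 2 ≤ Fintype.card F := Fintype.one_lt_card
    have hupper : numIrred F 1 ≤ Fintype.card F := by
      have h := Nat.card_le_card_of_injective
        (f := fun p : {p : Polynomial F // p.Monic ∧ Irreducible p ∧ p.natDegree = 1 ∧
          p.coeff 0 ≠ 0} => p.1.coeff 0) ?_
      · rw [Nat.card_eq_fintype_card (α := F)] at h
        exact h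
      · intro p p' h
        apply Subtype.ext
        have e1 : p.1 = X + C (p.1.coeff 0) := p.2.1.eq_X_add_C p.2.2.2.1
        have e2 : p'.1 = X + C (p'.1.coeff 0) := p'.2.1.eq_X_add_C p'.2.2.2.1
        rw [e1, e2]
        simp only at h
        rw [h]
    have hlower : Fintype.card F - 1 ≤ numIrred F 1 := by
      have h := Nat.card_le_card_of_injective
        (f := fun a : Fˣ => (⟨X - C (a:F), monic_X_sub_C _, irreducible_X_sub_C _,
          natDegree_X_sub_C _, by simp⟩ :
          {p : Polynomial F // p.Monic ∧ Irreducible p ∧ p.natDegree = 1 ∧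
            p.coeff 0 ≠ 0})) ?_
      · rw [Nat.card_eq_fintype_card (α := Fˣ), Fintype.card_units] at h
        exact h
      · intro a b hab
        have h2 := congrArg (fun p => p.1.coeff 0) hab
        simp only [coeff_sub, coeff_X_zero, coeff_C_zero, zero_sub, neg_inj] at h2
        exact Units.ext h2
    constructor
    · simp only [pow_one, one_mul, Nat.sub_self, pow_zero, mul_one]
      omega
    · simpa using hupper
  · have hiff : ∀ p : Polynomial F,
        (p.Monic ∧ Irreducible p ∧ p.natDegree = j ∧ p.coeff 0 ≠ 0) ↔
          (p.Monic ∧ Irreducible p ∧ p.natDegree = j) := by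
      intro p
      constructor
      · rintro ⟨a, b, c, -⟩
        exact ⟨a, b, c⟩
      · rintro ⟨a, b, c⟩
        refine ⟨a, b, c, fun h0 => ?_⟩
        obtain ⟨u, rfl⟩ := (X_dvd_iff).2 h0
        rcases b.isUnit_or_isUnit rfl with h | h
        · exact Polynomial.not_isUnit_X h
        · have hu0 : u ≠ 0 := by
            rintro rfl
            rw [mul_zero] at c
            simp at c
            omega
          have hu : u.natDegree = 0 := natDegree_eq_zero_of_isUnit h
          rw [natDegree_mul (X_ne_zero) hu0, natDegree_X, hu] at c
          omega
    have he : numIrred F j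
        = Nat.card {p : Polynomial F // p.Monic ∧ Irreducible p ∧ p.natDegree = j} := by
      rw [numIrred]
      exact Nat.card_congr (Equiv.subtypeEquivRight hiff)
    rw [he]
    exact Mcard_aux F j (by omega)

private lemma log_one_sub_le {x : ℝ} (hx : 0 ≤ x) (hx2 : x < 1) : Real.log (1 - x) ≤ -x := by
  have h := Real.log_le_sub_one_of_pos (by linarith : (0:ℝ) < 1 - x)
  linarith

private lemma le_log_one_sub {x : ℝ} (hx : 0 ≤ x) (hx2 : x ≤ 1/2) :
    -x - 2*x^2 ≤ Real.log (1 - x) := by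
  have h1 : (0:ℝ) < 1 - x := by linarith
  have h3 : Real.log (1-x)⁻¹ ≤ (1-x)⁻¹ - 1 := Real.log_le_sub_one_of_pos (by positivity)
  have h5 : (1-x)⁻¹ * (1-x) = 1 := inv_mul_cancel₀ (ne_of_gt h1)
  have h6 : (1-x)⁻¹ ≤ 1 + x + 2*x^2 := by
    nlinarith [mul_nonneg (sq_nonneg x) (by linarith : (0:ℝ) ≤ 1 - 2*x)]
  have h7 : Real.log (1-x)⁻¹ = - Real.log (1-x) := Real.log_inv _
  linarith

private lemma L_est {r : ℝ} (hr0 : 0 < r) (hr : r ≤ 1/2) :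
    Summable (fun i : ℕ => Real.log (1 - r ^ (i+1))) ∧
    -r - 6*r^2 ≤ (∑' i : ℕ, Real.log (1 - r ^ (i+1))) ∧
    (∑' i : ℕ, Real.log (1 - r ^ (i+1))) ≤ -r := by
  have hlt : r < 1 := by linarith
  have hxpos : ∀ i : ℕ, 0 < r ^ (i+1) := fun i => pow_pos hr0 _
  have hxle : ∀ i : ℕ, r ^ (i+1) ≤ r := by
    intro i
    calc r ^ (i+1) ≤ r ^ 1 := pow_le_pow_of_le_one hr0.le hlt.le (by omega)
      _ = r := pow_one r
  have hx2 : ∀ i : ℕ, r ^ (i+1) ≤ 1/2 := fun i => le_trans (hxle i) hr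
  have hlog_le : ∀ i : ℕ, Real.log (1 - r^(i+1)) ≤ -r^(i+1) := fun i =>
    log_one_sub_le (hxpos i).le (lt_of_le_of_lt (hx2 i) (by norm_num))
  have hlog_ge : ∀ i : ℕ, -(2 * r^(i+1)) ≤ Real.log (1 - r^(i+1)) := by
    intro i
    have h := le_log_one_sub (hxpos i).le (hx2 i)
    have hsq : (r^(i+1))^2 ≤ r^(i+1) * (1/2) :=
      (sq (r^(i+1))) ▸ mul_le_mul_of_nonneg_left (hx2 i) (hxpos i).le
    nlinarith [hxpos i]
  have hgeom : Summable (fun i : ℕ => r ^ (i+1)) := by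
    have h := (summable_geometric_of_lt_one hr0.le hlt).mul_right r
    simpa [pow_succ] using h
  have hsum : Summable (fun i : ℕ => Real.log (1 - r ^ (i+1))) := by
    apply Summable.of_norm_bounded (g := fun i => 2 * r^(i+1)) (hgeom.mul_left 2)
    intro i
    rw [Real.norm_eq_abs, abs_le]
    refine ⟨by linarith [hlog_ge i], by linarith [hlog_le i, hxpos i]⟩
  have hsum1 : Summable (fun i : ℕ => Real.log (1 - r ^ (i+2))) := by
    have h := (summable_nat_add_iff 1).2 hsum
    simpa using h
  have hts : ∑' i : ℕ, Real.log (1 - r ^ (i+1))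
      = Real.log (1 - r) + ∑' i : ℕ, Real.log (1 - r ^ (i+2)) := by
    rw [hsum.tsum_eq_zero_add]
    norm_num
  have hinv2 : (1 - r)⁻¹ ≤ 2 := by
    have h12 : (1:ℝ)/2 ≤ 1 - r := by linarith
    calc (1-r)⁻¹ ≤ ((1:ℝ)/2)⁻¹ := by
          apply inv_anti₀ (by norm_num) h12
      _ = 2 := by norm_num
  have htail_eq : ∑' i : ℕ, -(2 * r ^ (i+2)) = (1-r)⁻¹ * (-(2*r^2)) := by
    have hfe : (fun i : ℕ => -(2 * r ^ (i+2))) = fun i : ℕ => r^i * (-(2*r^2)) := by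
      funext i
      rw [pow_add]
      ring
    rw [hfe, tsum_mul_right, tsum_geometric_of_lt_one hr0.le hlt]
  have hgeom2 : Summable (fun i : ℕ => -(2 * r ^ (i+2))) := by
    have hfe : (fun i : ℕ => -(2 * r ^ (i+2))) = fun i : ℕ => r^i * (-(2*r^2)) := by
      funext i
      rw [pow_add]
      ring
    rw [hfe]
    exact (summable_geometric_of_lt_one hr0.le hlt).mul_right _
  refine ⟨hsum, ?_, ?_⟩
  · have htail_ge : (1-r)⁻¹ * (-(2*r^2)) ≤ ∑' i : ℕ, Real.log (1 - r ^ (i+2)) := by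
      rw [← htail_eq]
      apply Summable.tsum_le_tsum _ hgeom2 hsum1
      intro i
      have h := hlog_ge (i+1)
      have hpe : r ^ (i+1+1) = r ^ (i+2) := by norm_num
      rw [hpe] at h
      exact h
    have hlow1 : -r - 2*r^2 ≤ Real.log (1 - r) := le_log_one_sub hr0.le hr
    have hq : -(4*r^2) ≤ (1-r)⁻¹ * (-(2*r^2)) := by
      nlinarith [mul_nonneg (by linarith : (0:ℝ) ≤ 2 - (1-r)⁻¹) (by positivity : (0:ℝ) ≤ 2*r^2)]
    rw [hts]
    linarith
  · have htail_le : ∑' i : ℕ, Real.log (1 - r ^ (i+2)) ≤ 0 := by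
      apply tsum_nonpos
      intro i
      apply Real.log_nonpos
      · have : r ^ (i+2) ≤ 1/2 := by
          calc r ^ (i+2) ≤ r ^ 1 := pow_le_pow_of_le_one hr0.le hlt.le (by omega)
            _ = r := pow_one r
            _ ≤ 1/2 := hr
        linarith
      · have : 0 < r ^ (i+2) := pow_pos hr0 _
        linarith
    have hup1 : Real.log (1 - r) ≤ -r := log_one_sub_le hr0.le hlt
    rw [hts]
    linarith

private lemma term_est (q : ℕ) (hq : 2 ≤ q) (j : ℕ) (hj : 1 ≤ j) (N : ℕ)
    (hN1 : q ^ j ≤ j * N + 2 * q ^ (j-1)) (hN2 : j * N ≤ q ^ j) :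
    |(N : ℝ) * (∑' i : ℕ, Real.log (1 - (((1:ℝ)/q) ^ j) ^ (i+1))) + 1/j| ≤ 6/q := by
  have hq0 : (0:ℝ) < q := by positivity
  have hq2 : (2:ℝ) ≤ q := by exact_mod_cast hq
  set r : ℝ := ((1:ℝ)/q)^j with hr_def
  have hr0 : 0 < r := by positivity
  have hr_le : r ≤ 1/q := by
    calc r ≤ ((1:ℝ)/q)^1 := by
          apply pow_le_pow_of_le_one (by positivity)
          · rw [div_le_one hq0]; linarith
          · omega
      _ = 1/q := pow_one _
  have hrhalf : r ≤ 1/2 := by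
    apply le_trans hr_le
    apply one_div_le_one_div_of_le (by norm_num) hq2
  obtain ⟨hsum, hlow, hup⟩ := L_est hr0 hrhalf
  set L := ∑' i : ℕ, Real.log (1 - r ^ (i+1)) with hL
  have hN1' : (q:ℝ)^j ≤ (j:ℝ) * N + 2*(q:ℝ)^(j-1) := by exact_mod_cast hN1
  have hN2' : (j:ℝ) * N ≤ (q:ℝ)^j := by exact_mod_cast hN2
  have hqj_r : r * (q:ℝ)^j = 1 := by
    rw [hr_def, one_div, inv_pow, inv_mul_cancel₀ (by positivity)]
  have hpow_split : (q:ℝ)^j = (q:ℝ)^(j-1) * q := by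
    rw [← pow_succ]
    congr 1
    omega
  have hqj1_r : r * (q:ℝ)^(j-1) = 1/q := by
    rw [eq_div_iff (ne_of_gt hq0)]
    calc r * (q:ℝ)^(j-1) * q = r * ((q:ℝ)^(j-1) * q) := by ring
      _ = r * (q:ℝ)^j := by rw [← hpow_split]
      _ = 1 := hqj_r
  have hj0 : (0:ℝ) < j := by exact_mod_cast hj
  have hNnn : (0:ℝ) ≤ (j:ℝ) * N := by positivity
  have hNL_up : (j:ℝ) * ((N:ℝ) * L) + 1 ≤ 2/q := by
    have h2 : ((j:ℝ)*N) * L ≤ ((j:ℝ)*N) * (-r) := mul_le_mul_of_nonneg_left hup hNnn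
    have h4 : r * ((q:ℝ)^j - 2*(q:ℝ)^(j-1)) ≤ r * ((j:ℝ)*N) :=
      mul_le_mul_of_nonneg_left (by linarith) hr0.le
    have h5 : r * ((q:ℝ)^j - 2*(q:ℝ)^(j-1)) = 1 - 2*(1/q) := by
      calc r * ((q:ℝ)^j - 2*(q:ℝ)^(j-1)) = r*(q:ℝ)^j - 2*(r*(q:ℝ)^(j-1)) := by ring
        _ = 1 - 2*(1/q) := by rw [hqj_r, hqj1_r]
    have h6 : ((j:ℝ)*N) * (-r) = -(r * ((j:ℝ)*N)) := by ring
    have h7 : (j:ℝ)*((N:ℝ)*L) = ((j:ℝ)*N)*L := by ring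
    have h8 : 2*((1:ℝ)/q) = 2/q := by ring
    linarith
  have hNL_low : -1 - 6/q ≤ (j:ℝ) * ((N:ℝ) * L) := by
    have h2 : ((j:ℝ)*N) * (-r - 6*r^2) ≤ ((j:ℝ)*N) * L := mul_le_mul_of_nonneg_left hlow hNnn
    have h3 : (q:ℝ)^j * (-r - 6*r^2) ≤ ((j:ℝ)*N) * (-r - 6*r^2) :=
      mul_le_mul_of_nonpos_right hN2' (by nlinarith)
    have h4 : (q:ℝ)^j * (-r - 6*r^2) = -1 - 6*r := by
      have hc : (q:ℝ)^j * r = 1 := by rw [mul_comm]; exact hqj_r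
      calc (q:ℝ)^j * (-r - 6*r^2) = -((q:ℝ)^j*r) - 6*(((q:ℝ)^j*r)*r) := by ring
        _ = -1 - 6*r := by rw [hc]; ring
    have h5 : 6*r ≤ 6/q := by
      have h51 : 6*r ≤ 6*(1/q) := by linarith
      have h52 : 6*((1:ℝ)/q) = 6/q := by ring
      linarith
    have h7 : (j:ℝ)*((N:ℝ)*L) = ((j:ℝ)*N)*L := by ring
    linarith
  have hkey : (N:ℝ)*L + 1/(j:ℝ) = ((j:ℝ)*((N:ℝ)*L) + 1)/(j:ℝ) := by
    field_simp
  rw [hkey, abs_div, abs_of_pos hj0]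
  have h26 : (2:ℝ)/q ≤ 6/q := (div_le_div_iff_of_pos_right hq0).mpr (by norm_num)
  have habs : |(j:ℝ)*((N:ℝ)*L) + 1| ≤ 6/q := by
    rw [abs_le]
    constructor
    · linarith
    · linarith
  calc |(j:ℝ)*((N:ℝ)*L)+1| / (j:ℝ) ≤ (6/q)/(j:ℝ) := (div_le_div_iff_of_pos_right hj0).mpr habs
    _ ≤ 6/q := by
        apply div_le_self (by positivity)
        exact_mod_cast hj

private lemma tprod_eq_exp (N : ℕ) {r : ℝ} (hr0 : 0 < r) (hr : r ≤ 1/2) :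
    (∏' i : ℕ, (1 - r ^ (i+1)) ^ N) = Real.exp ((N:ℝ) * ∑' i : ℕ, Real.log (1 - r ^ (i+1))) := by
  obtain ⟨hsum, -, -⟩ := L_est hr0 hr
  have hlt : r < 1 := by linarith
  have hpos : ∀ i : ℕ, (0:ℝ) < 1 - r^(i+1) := by
    intro i
    have h1 : r ^ (i+1) ≤ r := by
      calc r ^ (i+1) ≤ r ^ 1 := pow_le_pow_of_le_one hr0.le hlt.le (by omega)
        _ = r := pow_one r
    linarith [le_trans h1 hr]
  have hsum2 : ∀ _ : Unit, Summable fun i : ℕ => Real.log ((1 - r^(i+1))^N) := by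
    intro _
    simp only [Real.log_pow]
    exact hsum.mul_left _
  have h := Real.rexp_tsum_eq_tprod (f := fun (i : ℕ) => (1 - r^(i+1))^N)
    (fun i => pow_pos (hpos i) N) (hsum2 ())
  have h2 := h
  rw [← h2]
  congr 1
  simp only [Real.log_pow]
  rw [tsum_mul_left]

theorem stmt5 (t : ℕ) (ht : 1 ≤ t) :
    ∀ ε : ℝ, 0 < ε → ∃ Q : ℕ, ∀ (F : Type) [Field F] [Fintype F],
      Q ≤ Fintype.card F →
      |(∏ j ∈ Finset.Icc 1 t, ∏' i : ℕ,
          (1 - 1 / (Fintype.card F : ℝ) ^ ((i + 1) * j)) ^ (numIrred F j)) -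
        Real.exp (-(∑ j ∈ Finset.Icc 1 t, (1 : ℝ) / j))| < ε := by
  intro ε hε
  set H : ℝ := ∑ j ∈ Finset.Icc 1 t, (1:ℝ)/j with hH
  obtain ⟨δ, hδ0, hδ⟩ := Metric.continuousAt_iff.1 (Real.continuous_exp.continuousAt (x := -H)) ε hε
  refine ⟨max 2 (Nat.ceil (6*(t:ℝ)/δ) + 1), ?_⟩
  intro F _ _ hQ
  obtain ⟨q, hq_def⟩ : ∃ n, Fintype.card F = n := ⟨_, rfl⟩
  rw [hq_def] at hQ ⊢
  have hq2 : 2 ≤ q := le_trans (le_max_left _ _) hQ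
  have hq0 : (0:ℝ) < q := by
    have : 0 < q := by omega
    exact_mod_cast this
  have hqδ : 6*(t:ℝ)/q < δ := by
    have h1 : (Nat.ceil (6*(t:ℝ)/δ) + 1 : ℕ) ≤ q := le_trans (le_max_right _ _) hQ
    have h2 : (6*(t:ℝ)/δ) < q := by
      calc (6*(t:ℝ)/δ) ≤ (Nat.ceil (6*(t:ℝ)/δ) : ℝ) := Nat.le_ceil _
        _ < ((Nat.ceil (6*(t:ℝ)/δ) + 1 : ℕ) : ℝ) := by exact_mod_cast Nat.lt_succ_self _
        _ ≤ q := by exact_mod_cast h1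
    rw [div_lt_iff₀ hδ0] at h2
    rw [div_lt_iff₀ hq0]
    linarith
  set N : ℕ → ℕ := fun j => numIrred F j with hN
  set L : ℕ → ℝ := fun j => ∑' i : ℕ, Real.log (1 - (((1:ℝ)/q)^j) ^ (i+1)) with hLdef
  have hprod : (∏ j ∈ Finset.Icc 1 t, ∏' i : ℕ, (1 - 1 / (q:ℝ) ^ ((i+1)*j)) ^ (N j))
      = Real.exp (∑ j ∈ Finset.Icc 1 t, (N j : ℝ) * L j) := by
    rw [Real.exp_sum]
    apply Finset.prod_congr rfl
    intro j hj
    rw [Finset.mem_Icc] at hj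
    have hj1 : 1 ≤ j := hj.1
    have hr0 : (0:ℝ) < ((1:ℝ)/q)^j := by positivity
    have hrhalf : ((1:ℝ)/q)^j ≤ 1/2 := by
      calc ((1:ℝ)/q)^j ≤ ((1:ℝ)/q)^1 := by
            apply pow_le_pow_of_le_one (by positivity)
            · rw [div_le_one hq0]
              have hq2' : (2:ℝ) ≤ (q:ℝ) := by exact_mod_cast hq2
              linarith
            · omega
        _ = 1/q := pow_one _
        _ ≤ 1/2 := one_div_le_one_div_of_le (by norm_num) (by exact_mod_cast hq2)
    have hconv : ∀ i : ℕ, ((1:ℝ) - 1 / (q:ℝ) ^ ((i+1)*j)) ^ (N j)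
        = (1 - (((1:ℝ)/q)^j) ^ (i+1)) ^ (N j) := by
      intro i
      rw [← one_div_pow, ← pow_mul, mul_comm]
    rw [tprod_congr hconv]
    exact tprod_eq_exp (N j) hr0 hrhalf
  rw [hprod]
  have hper : ∀ j ∈ Finset.Icc 1 t, |(N j : ℝ) * L j + 1/(j:ℝ)| ≤ 6/(q:ℝ) := by
    intro j hj
    rw [Finset.mem_Icc] at hj
    have hb := numIrred_bounds F j hj.1
    rw [hq_def] at hb
    exact term_est q hq2 j hj.1 (N j) hb.1 hb.2
  have hA : |(∑ j ∈ Finset.Icc 1 t, (N j : ℝ) * L j) - (-H)| < δ := by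
    have he : (∑ j ∈ Finset.Icc 1 t, (N j : ℝ) * L j) - (-H)
        = ∑ j ∈ Finset.Icc 1 t, ((N j : ℝ) * L j + 1/(j:ℝ)) := by
      rw [Finset.sum_add_distrib, hH]
      ring
    rw [he]
    calc |∑ j ∈ Finset.Icc 1 t, ((N j : ℝ) * L j + 1/(j:ℝ))|
        ≤ ∑ j ∈ Finset.Icc 1 t, |(N j : ℝ) * L j + 1/(j:ℝ)| := Finset.abs_sum_le_sum_abs _ _
      _ ≤ ∑ _j ∈ Finset.Icc 1 t, 6/(q:ℝ) := Finset.sum_le_sum hper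
      _ = ((Finset.Icc 1 t).card : ℝ) * (6/(q:ℝ)) := by rw [Finset.sum_const, nsmul_eq_mul]
      _ = (t:ℝ) * (6/(q:ℝ)) := by rw [Nat.card_Icc]; norm_num
      _ = 6*(t:ℝ)/(q:ℝ) := by ring
      _ < δ := hqδ
  have hfin := hδ (by rw [Real.dist_eq]; exact hA)
  rw [Real.dist_eq] at hfin
  exact hfin
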